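/- Let γ be a 2n×2n real symmetric matrix with γ ≥ iσ_{2n}. Then rank(γ - iσ_{2n}) = 2n - #₁(D), where D is the list of symplectic eigenvalues of γ and #₁(D) is the number of them equal to 1. Equivalently, dim ker(γ - iσ_{2n}) equals the number of unit symplectic eigenvalues of γ. -/

import Mathlib

open Matrix Complex ComplexOrder

/-- The standard symplectic form `[[0, I_n], [-I_n, 0]]` on `n` modes. -/
def sympForm (n : ℕ) : Matrix (Fin n ⊕ Fin n) (Fin n ⊕ Fin n) ℝ :=
  Matrix.fromBlocks 0 1 (-1) 0

/-- Let `γ` be real symmetric with `γ ≥ iσ_{2n}` and let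
`S γ Sᵀ = diag(D, D)` be its Williamson normal form (`S` symplectic, `D_j ≥ 1` the
symplectic eigenvalues of `γ`).  Then `rank(γ - iσ_{2n}) = 2n - #₁(D)`, where `#₁(D)` is
the number of unit symplectic eigenvalues; equivalently `dim ker(γ - iσ_{2n}) = #₁(D)`. -/
theorem rank_gamma_sub_i_sigma (n : ℕ)
    (γ S : Matrix (Fin n ⊕ Fin n) (Fin n ⊕ Fin n) ℝ) (D : Fin n → ℝ)
    (hγ : γ.IsSymm)
    (h : ((γ.map Complex.ofReal) - Complex.I • ((sympForm n).map Complex.ofReal)).PosSemidef)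
    (hS : S * sympForm n * Sᵀ = sympForm n)
    (hW : S * γ * Sᵀ = Matrix.fromBlocks (Matrix.diagonal D) 0 0 (Matrix.diagonal D))
    (hD : ∀ j, 1 ≤ D j) :
    ((γ.map Complex.ofReal) - Complex.I • ((sympForm n).map Complex.ofReal)).rank =
      2 * n - Nat.card {j : Fin n // D j = 1} := by
  classical
  set c : ℝ →+* ℂ := Complex.ofRealHom with hc
  -- the complexifications
  set Sc := S.map c with hSc
  set A := ((γ.map Complex.ofReal) - Complex.I • ((sympForm n).map Complex.ofReal)) with hA
  -- σ is invertible
  have hσσ : sympForm n * sympForm n = -1 := by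
    have : (-1 : Matrix (Fin n ⊕ Fin n) (Fin n ⊕ Fin n) ℝ) =
        Matrix.fromBlocks (-1) (-0) (-0) (-1) := by
      rw [← Matrix.fromBlocks_neg, Matrix.fromBlocks_one]
    rw [this]
    simp [sympForm, Matrix.fromBlocks_multiply]
  have hdetσ : (sympForm n).det * (sympForm n).det = 1 := by
    rw [← Matrix.det_mul, hσσ, Matrix.det_neg, Matrix.det_one, mul_one]
    rw [Fintype.card_sum, Fintype.card_fin]
    exact Even.neg_one_pow ⟨n, rfl⟩
  have hdetS : IsUnit S.det := by
    have h1 : S.det * S.det * (sympForm n).det = (sympForm n).det := by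
      have := congrArg Matrix.det hS
      rwa [Matrix.det_mul, Matrix.det_mul, Matrix.det_transpose, mul_comm,
        ← mul_assoc] at this
    have hσne : (sympForm n).det ≠ 0 := by
      intro h0; rw [h0, mul_zero] at hdetσ; exact zero_ne_one hdetσ
    have : S.det * S.det = 1 := by
      have h2 : S.det * S.det * (sympForm n).det = 1 * (sympForm n).det := by
        rw [one_mul]; exact h1
      exact mul_right_cancel₀ hσne h2
    exact IsUnit.of_mul_eq_one _ this
  have hdetSc : IsUnit Sc.det := by
    have : Sc.det = c S.det := (RingHom.map_det c S).symm
    rw [this]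
    exact hdetS.map c
  have hdetScT : IsUnit (Scᵀ).det := by rwa [Matrix.det_transpose]
  -- the diagonalizer T and its inverse
  set T : Matrix (Fin n ⊕ Fin n) (Fin n ⊕ Fin n) ℂ :=
    Matrix.fromBlocks 1 1 (Complex.I • 1) (-(Complex.I • 1)) with hT
  have hdetT : IsUnit T.det := by
    have he : -(Complex.I • (1 : Matrix (Fin n) (Fin n) ℂ)) - (Complex.I • 1) * 1 =
        (-(2 * Complex.I)) • 1 := by
      rw [Matrix.mul_one]
      module
    rw [hT, Matrix.det_fromBlocks_one₁₁, he, Matrix.det_smul, Matrix.det_one, mul_one]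
    rw [isUnit_iff_ne_zero]
    apply pow_ne_zero
    simp [Complex.I_ne_zero]
  -- the diagonal entries
  set w : (Fin n ⊕ Fin n) → ℂ :=
    Sum.elim (fun j => (D j : ℂ) + 1) (fun j => (D j : ℂ) - 1) with hw
  set Dc : Matrix (Fin n) (Fin n) ℂ := Matrix.diagonal (fun j => (D j : ℂ)) with hDc
  set Mc : Matrix (Fin n ⊕ Fin n) (Fin n ⊕ Fin n) ℂ :=
    Matrix.fromBlocks Dc (-(Complex.I • 1)) (Complex.I • 1) Dc with hMc
  -- congruence by Sc turns A into Mc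
  have hkey : Sc * A * Scᵀ = Mc := by
    have hmapσ : (sympForm n).map Complex.ofReal = (sympForm n).map c := rfl
    have hmapγ : γ.map Complex.ofReal = γ.map c := rfl
    rw [hA, hmapσ, hmapγ, Matrix.mul_sub, Matrix.sub_mul, Matrix.mul_smul,
      Matrix.smul_mul]
    have hST : Scᵀ = Sᵀ.map c := by rw [hSc, Matrix.transpose_map]
    have e1 : Sc * γ.map c * Scᵀ =
        (Matrix.fromBlocks (Matrix.diagonal D) 0 0 (Matrix.diagonal D)).map c := by
      rw [hSc, hST, ← Matrix.map_mul, ← Matrix.map_mul, hW]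
    have e2 : Sc * (sympForm n).map c * Scᵀ = (sympForm n).map c := by
      rw [hSc, hST, ← Matrix.map_mul, ← Matrix.map_mul, hS]
    rw [e1, e2, hMc]
    rw [sympForm, Matrix.fromBlocks_map, Matrix.fromBlocks_map, Matrix.fromBlocks_smul]
    rw [show ((0 : Matrix (Fin n) (Fin n) ℝ).map c) = 0 from Matrix.map_zero _ c.map_zero,
      show ((1 : Matrix (Fin n) (Fin n) ℝ).map c) = 1 from Matrix.map_one _ c.map_zero c.map_one,
      show (((-1) : Matrix (Fin n) (Fin n) ℝ).map c) = -1 by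
        ext i j
        by_cases hij : i = j <;>
          simp [Matrix.map_apply, Matrix.one_apply, hij],
      show ((Matrix.diagonal D).map c) = Dc from Matrix.diagonal_map c.map_zero]
    rw [sub_eq_add_neg, Matrix.fromBlocks_neg, Matrix.fromBlocks_add]
    congr 1 <;> simp [smul_neg]
  -- Mc * T = T * diagonal w
  have hMT : Mc * T = T * Matrix.diagonal w := by
    rw [hw, ← Matrix.fromBlocks_diagonal, hMc, hT, Matrix.fromBlocks_multiply,
      Matrix.fromBlocks_multiply]
    have hd1 : Matrix.diagonal (fun j => (D j : ℂ) + 1) = Dc + 1 := by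
      rw [hDc, ← Matrix.diagonal_one, Matrix.diagonal_add]
    have hd2 : Matrix.diagonal (fun j => (D j : ℂ) - 1) = Dc - 1 := by
      rw [hDc, ← Matrix.diagonal_one, Matrix.diagonal_sub]
    refine Matrix.fromBlocks_inj.mpr ⟨?_, ?_, ?_, ?_⟩ <;>
      simp only [hd1, hd2, Matrix.mul_one, Matrix.one_mul, Matrix.mul_zero, Matrix.zero_mul,
        Matrix.smul_mul, Matrix.mul_smul, smul_smul, Complex.I_mul_I, Matrix.neg_mul,
        Matrix.mul_neg, neg_smul, smul_neg, neg_neg, one_smul, add_zero, zero_add] <;>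
      module
  -- rank computation
  have hrank : A.rank = (Matrix.diagonal w).rank := by
    calc A.rank = (Sc * A * Scᵀ).rank := by
          rw [Matrix.rank_mul_eq_left_of_isUnit_det _ _ hdetScT,
            Matrix.rank_mul_eq_right_of_isUnit_det _ _ hdetSc]
      _ = Mc.rank := by rw [hkey]
      _ = (Mc * T).rank := (Matrix.rank_mul_eq_left_of_isUnit_det _ _ hdetT).symm
      _ = (T * Matrix.diagonal w).rank := by rw [hMT]
      _ = (Matrix.diagonal w).rank := Matrix.rank_mul_eq_right_of_isUnit_det _ _ hdetT
  rw [hrank, Matrix.rank_diagonal]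
  -- counting
  have hcount : Fintype.card {i // w i ≠ 0} =
      Fintype.card {j : Fin n // w (Sum.inl j) ≠ 0} +
      Fintype.card {j : Fin n // w (Sum.inr j) ≠ 0} := by
    rw [← Fintype.card_sum]
    exact Fintype.card_congr Equiv.subtypeSum
  have h1 : Fintype.card {j : Fin n // w (Sum.inl j) ≠ 0} = n := by
    have : ∀ j : Fin n, w (Sum.inl j) ≠ 0 := by
      intro j
      rw [hw]
      simp only [Sum.elim_inl]
      rw [show ((D j : ℂ) + 1) = ((D j + 1 : ℝ) : ℂ) by push_cast; ring]
      rw [Complex.ofReal_ne_zero]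
      nlinarith [hD j]
    calc Fintype.card {j : Fin n // w (Sum.inl j) ≠ 0}
        = Fintype.card (Fin n) := Fintype.card_congr (Equiv.subtypeUnivEquiv this)
      _ = n := Fintype.card_fin n
  have h2 : Fintype.card {j : Fin n // w (Sum.inr j) ≠ 0} =
      Fintype.card {j : Fin n // D j ≠ 1} := by
    apply Fintype.card_congr
    apply Equiv.subtypeEquivRight
    intro j
    rw [hw]
    simp only [Sum.elim_inr]
    rw [show ((D j : ℂ) - 1) = ((D j - 1 : ℝ) : ℂ) by push_cast; ring,
      Complex.ofReal_ne_zero, sub_ne_zero]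
  have h3 : Fintype.card {j : Fin n // D j ≠ 1} =
      n - Fintype.card {j : Fin n // D j = 1} := by
    have := Fintype.card_subtype_compl (fun j : Fin n => D j = 1)
    simpa [Fintype.card_fin] using this
  have h4 : Fintype.card {j : Fin n // D j = 1} ≤ n := by
    have := Fintype.card_subtype_le (fun j : Fin n => D j = 1)
    simpa [Fintype.card_fin] using this
  rw [hcount, h1, h2, h3, Nat.card_eq_fintype_card]
  omega
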